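/- Let $1 < p < q < r$ with $p < 7/3$ and $\beta > 0$. Define for $s \in (0,1)$: $D_1(s) = s^{\frac{p-1}{2}} - s^{\frac{q-1}{2}}$, $D_2(s) = s^{\frac{q-1}{2}} - s^{\frac{r-1}{2}}$, and $\phi(s) = \left(\frac{D_1(s) + \beta D_2(s)}{s^{\frac{p-1}{2}} - s^{3-p}}\right)^{3/2}$. Then $\phi$ is strictly increasing on $(0,1)$ and has a finite limit as $s \to 1^-$. -/

import Mathlib

open Set Filter Real Topology

lemma exp_convex_aux (u x y z : ℝ) (hu : u ≠ 0) (hxy : x < y) (hyz : y < z) :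
    (z - x) * Real.exp (y * u) < (z - y) * Real.exp (x * u) + (y - x) * Real.exp (z * u) := by
  have hxz : x < z := hxy.trans hyz
  have hzx : (0:ℝ) < z - x := by linarith
  have h1 : (0:ℝ) < (z - y) / (z - x) := by apply div_pos <;> linarith
  have h2 : (0:ℝ) < (y - x) / (z - x) := by apply div_pos <;> linarith
  have hsum : (z - y) / (z - x) + (y - x) / (z - x) = 1 := by field_simp; ring
  have hne : x * u ≠ z * u := by
    intro h
    exact hxz.ne (mul_right_cancel₀ hu h)
  have key := strictConvexOn_exp.2 (Set.mem_univ (x*u)) (Set.mem_univ (z*u)) hne h1 h2 hsum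
  simp only [smul_eq_mul] at key
  have hcomb : (z - y) / (z - x) * (x * u) + (y - x) / (z - x) * (z * u) = y * u := by
    field_simp
    ring
  rw [hcomb] at key
  have h3 := mul_lt_mul_of_pos_left key hzx
  calc (z - x) * Real.exp (y * u)
      < (z - x) * ((z - y) / (z - x) * Real.exp (x*u) + (y - x) / (z - x) * Real.exp (z*u)) := h3
    _ = (z - y) * Real.exp (x * u) + (y - x) * Real.exp (z * u) := by field_simp

-- key positivity lemma for the "Wronskian"
lemma bracket_pos (a b c d β s : ℝ) (ha : 0 < a) (hab : a < b) (hbc : b < c)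
    (had : a < d) (hdb : d < b) (hβ : 0 < β) (hs0 : 0 < s) (hs1 : s < 1) :
    0 < β * ((b-a)*s^(a+b) + (c-d)*s^(c+d) - (b-d)*s^(b+d) - (c-a)*s^(a+c))
      + ((d-a)*s^(a+d) - (b-a)*s^(a+b) + (b-d)*s^(b+d)) := by
  set u := Real.log s with hu_def
  have hu : u ≠ 0 := by
    have := Real.log_neg hs0 hs1
    linarith
  have hE : ∀ x : ℝ, s ^ x = Real.exp (x * u) := by
    intro x
    rw [Real.rpow_def_of_pos hs0, mul_comm]
  -- C > 0
  have hC := exp_convex_aux u (a+d) (a+b) (b+d) hu (by linarith) (by linarith)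
  -- B ≥ 0
  have h1 := (exp_convex_aux u (a+b) (b+d) (c+d) hu (by linarith) (by linarith)).le
  have h2 := (exp_convex_aux u (a+b) (a+c) (c+d) hu (by linarith) (by linarith)).le
  rw [hE (a+b), hE (c+d), hE (b+d), hE (a+c), hE (a+d)]
  have h1' := mul_le_mul_of_nonneg_left h1 (show (0:ℝ) ≤ b - d by linarith)
  have h2' := mul_le_mul_of_nonneg_left h2 (show (0:ℝ) ≤ c - a by linarith)
  have hK : (0:ℝ) < c + d - (a + b) := by linarith
  have hB : 0 ≤ (b-a)*Real.exp ((a+b)*u) + (c-d)*Real.exp ((c+d)*u)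
      - (b-d)*Real.exp ((b+d)*u) - (c-a)*Real.exp ((a+c)*u) := by
    nlinarith [h1', h2']
  nlinarith [hC, hB, hβ]

theorem phi_strict_mono_and_limit
    (p q r β : ℝ) (hp : 1 < p) (hpq : p < q) (hqr : q < r) (hp73 : p < 7/3)
    (hβ : 0 < β) (hq7 : 7 - 2*p < q)
    (φ : ℝ → ℝ)
    (hφ : ∀ s ∈ Ioo (0:ℝ) 1,
      φ s = (((s ^ ((p - 1)/2) - s ^ ((q - 1)/2))
          + β * (s ^ ((q - 1)/2) - s ^ ((r - 1)/2)))
            / (s ^ ((p - 1)/2) - s ^ (3 - p))) ^ ((3:ℝ)/2)) :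
    StrictMonoOn φ (Ioo (0:ℝ) 1) ∧
      ∃ L : ℝ, Tendsto φ (nhdsWithin 1 (Iio 1)) (nhds L) := by
  set a := (p - 1)/2 with ha_def
  set b := (q - 1)/2 with hb_def
  set c := (r - 1)/2 with hc_def
  set d := 3 - p with hd_def
  have ha : 0 < a := by rw [ha_def]; linarith
  have hab : a < b := by rw [ha_def, hb_def]; linarith
  have hbc : b < c := by rw [hb_def, hc_def]; linarith
  have had : a < d := by rw [ha_def, hd_def]; linarith
  have hdb : d < b := by rw [hb_def, hd_def]; linarith
  set N : ℝ → ℝ := fun s => s ^ a - s ^ b + β * (s ^ b - s ^ c) with hN_def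
  set D : ℝ → ℝ := fun s => s ^ a - s ^ d with hD_def
  -- positivity on Ioo
  have hDpos : ∀ s ∈ Ioo (0:ℝ) 1, 0 < D s := by
    intro s hs
    have := Real.rpow_lt_rpow_of_exponent_gt hs.1 hs.2 had
    simpa [hD_def] using sub_pos.mpr this
  have hNpos : ∀ s ∈ Ioo (0:ℝ) 1, 0 < N s := by
    intro s hs
    have h1 := Real.rpow_lt_rpow_of_exponent_gt hs.1 hs.2 hab
    have h2 := Real.rpow_lt_rpow_of_exponent_gt hs.1 hs.2 hbc
    have : 0 < s ^ a - s ^ b + β * (s ^ b - s ^ c) := by nlinarith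
    simpa [hN_def] using this
  -- derivatives on Ioo
  have hNderiv : ∀ s : ℝ, 0 < s → HasDerivAt N
      (a * s ^ (a-1) - b * s ^ (b-1) + β * (b * s ^ (b-1) - c * s ^ (c-1))) s := by
    intro s hs
    have h1 := Real.hasDerivAt_rpow_const (p := a) (Or.inl hs.ne')
    have h2 := Real.hasDerivAt_rpow_const (p := b) (Or.inl hs.ne')
    have h3 := Real.hasDerivAt_rpow_const (p := c) (Or.inl hs.ne')
    exact ((h1.sub h2).add ((h2.sub h3).const_mul β))
  have hDderiv : ∀ s : ℝ, 0 < s → HasDerivAt D (a * s ^ (a-1) - d * s ^ (d-1)) s := by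
    intro s hs
    have h1 := Real.hasDerivAt_rpow_const (p := a) (Or.inl hs.ne')
    have h2 := Real.hasDerivAt_rpow_const (p := d) (Or.inl hs.ne')
    exact h1.sub h2
  -- the quotient and its derivative
  set R : ℝ → ℝ := fun s => N s / D s with hR_def
  have hW : ∀ s ∈ Ioo (0:ℝ) 1,
      0 < ((a * s ^ (a-1) - b * s ^ (b-1) + β * (b * s ^ (b-1) - c * s ^ (c-1))) * D s
        - N s * (a * s ^ (a-1) - d * s ^ (d-1))) := by
    intro s hs
    obtain ⟨hs0, hs1⟩ := hs
    have key : ∀ x : ℝ, s ^ (x - 1) = s ^ x / s := by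
      intro x
      rw [Real.rpow_sub hs0, Real.rpow_one]
    have madd : ∀ x y : ℝ, s ^ (x + y) = s ^ x * s ^ y := fun x y => Real.rpow_add hs0 x y
    have hbr := bracket_pos a b c d β s ha hab hbc had hdb hβ hs0 hs1
    have heq : (a * s ^ (a-1) - b * s ^ (b-1) + β * (b * s ^ (b-1) - c * s ^ (c-1))) * D s
        - N s * (a * s ^ (a-1) - d * s ^ (d-1))
        = (β * ((b-a)*s^(a+b) + (c-d)*s^(c+d) - (b-d)*s^(b+d) - (c-a)*s^(a+c))
          + ((d-a)*s^(a+d) - (b-a)*s^(a+b) + (b-d)*s^(b+d))) / s := by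
      simp only [hN_def, hD_def, key, madd]
      field_simp
      ring
    rw [heq]
    positivity
  have hRderiv : ∀ s ∈ Ioo (0:ℝ) 1, HasDerivAt R
      (((a * s ^ (a-1) - b * s ^ (b-1) + β * (b * s ^ (b-1) - c * s ^ (c-1))) * D s
        - N s * (a * s ^ (a-1) - d * s ^ (d-1))) / (D s)^2) s := by
    intro s hs
    exact (hNderiv s hs.1).div (hDderiv s hs.1) (hDpos s hs).ne'
  have hRmono : StrictMonoOn R (Ioo (0:ℝ) 1) := by
    apply strictMonoOn_of_deriv_pos (convex_Ioo 0 1)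
    · intro s hs
      exact (hRderiv s hs).continuousAt.continuousWithinAt
    · intro s hs
      rw [interior_Ioo] at hs
      rw [(hRderiv s hs).deriv]
      exact div_pos (hW s hs) (pow_pos (hDpos s hs) 2)
  have hφR : ∀ s ∈ Ioo (0:ℝ) 1, φ s = (R s) ^ ((3:ℝ)/2) := by
    intro s hs
    rw [hφ s hs]
  constructor
  · intro x hx y hy hxy
    rw [hφR x hx, hφR y hy]
    have hRx : 0 ≤ R x := (div_pos (hNpos x hx) (hDpos x hx)).le
    exact Real.rpow_lt_rpow hRx (hRmono hx hy hxy) (by norm_num)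
  · refine ⟨((a - b + β * (b - c)) / (a - d)) ^ ((3:ℝ)/2), ?_⟩
    have hN1 : HasDerivAt N (a - b + β * (b - c)) 1 := by
      have := hNderiv 1 one_pos
      simpa [Real.one_rpow] using this
    have hD1 : HasDerivAt D (a - d) 1 := by
      have := hDderiv 1 one_pos
      simpa [Real.one_rpow] using this
    have hN10 : N 1 = 0 := by simp [hN_def, Real.one_rpow]
    have hD10 : D 1 = 0 := by simp [hD_def, Real.one_rpow]
    have hTN := hasDerivAt_iff_tendsto_slope.mp hN1
    have hTD := hasDerivAt_iff_tendsto_slope.mp hD1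
    have hadne : a - d ≠ 0 := by linarith
    have hT : Tendsto (fun s => slope N 1 s / slope D 1 s) (𝓝[≠] (1:ℝ))
        (𝓝 ((a - b + β * (b - c)) / (a - d))) := hTN.div hTD hadne
    have hsub : 𝓝[Iio (1:ℝ)] 1 ≤ 𝓝[≠] (1:ℝ) :=
      nhdsWithin_mono 1 (fun x hx => ne_of_lt hx)
    have hT' := hT.mono_left hsub
    have hmem : Ioo (0:ℝ) 1 ∈ 𝓝[Iio (1:ℝ)] 1 := by
      apply mem_nhdsWithin.mpr
      exact ⟨Ioi 0, isOpen_Ioi, by norm_num, fun x hx => ⟨hx.1, hx.2⟩⟩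
    have hcongr : (fun s => slope N 1 s / slope D 1 s) =ᶠ[𝓝[Iio (1:ℝ)] 1] R := by
      filter_upwards [hmem] with s hs
      have hne : s - 1 ≠ 0 := by
        have := hs.2
        intro h; linarith [sub_eq_zero.mp h]
      simp only [slope_def_field, hN10, hD10, sub_zero, hR_def]
      have hDne : D s ≠ 0 := (hDpos s hs).ne'
      field_simp
    have hTR : Tendsto R (𝓝[Iio (1:ℝ)] 1) (𝓝 ((a - b + β * (b - c)) / (a - d))) :=
      hT'.congr' hcongr
    have hfinal := hTR.rpow_const (p := (3:ℝ)/2) (Or.inr (by norm_num))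
    apply hfinal.congr'
    filter_upwards [hmem] with s hs
    exact (hφR s hs).symm
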